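/- A nice shape of order n can be transformed into a straight line of order n in at most 2(n − k) line moves, where k is the length of its central line; in particular in O(n) moves. -/

import Mathlib

/-- The four axis-parallel unit directions. -/
def unitDir (v : ℤ × ℤ) : Prop :=
  v = (1, 0) ∨ v = (-1, 0) ∨ v = (0, 1) ∨ v = (0, -1)

/-- A permissible line move: a node `u` is pushed one step in direction `v`,
pushing along the run of `k ≥ 1` consecutive occupied cells starting at `u`,
whose next cell in direction `v` is empty; the configuration is translated by
vacating the rear cell `u` and occupying the front cell `u + k•v`. -/
def lineMove (C C' : Finset (ℤ × ℤ)) : Prop :=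
  ∃ (u v : ℤ × ℤ) (k : ℕ), unitDir v ∧ 1 ≤ k ∧
    (∀ j : ℕ, j < k → u + j • v ∈ C) ∧
    u + k • v ∉ C ∧
    C' = insert (u + k • v) (C.erase u)

/-- `reachIn n A B`: configuration `A` can be transformed into `B` by a
sequence of exactly `n` permissible line moves. -/
def reachIn (n : ℕ) (A B : Finset (ℤ × ℤ)) : Prop :=
  ∃ f : ℕ → Finset (ℤ × ℤ), f 0 = A ∧ f n = B ∧
    ∀ i : ℕ, i < n → lineMove (f i) (f (i + 1))

/-- A configuration that is a straight (horizontal or vertical) line. -/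
def isLine (C : Finset (ℤ × ℤ)) : Prop :=
  ∃ (p v : ℤ × ℤ), (v = (1, 0) ∨ v = (0, 1)) ∧
    C = (Finset.range C.card).image fun i => p + i • v

lemma prod_add_nsmul (x y a b : ℤ) (j : ℕ) :
    ((x, y) : ℤ × ℤ) + j • ((a, b) : ℤ × ℤ) = (x + j * a, y + j * b) := by
  simp [Prod.ext_iff]

lemma reachIn_trans {a b : ℕ} {A B C : Finset (ℤ × ℤ)}
    (h1 : reachIn a A B) (h2 : reachIn b B C) : reachIn (a + b) A C := by
  obtain ⟨f, hf0, hfa, hfm⟩ := h1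
  obtain ⟨g, hg0, hgb, hgm⟩ := h2
  refine ⟨fun i => if i < a then f i else g (i - a), ?_, ?_, ?_⟩
  · by_cases h : 0 < a
    · simp [h, hf0]
    · have ha : a = 0 := by omega
      subst ha
      simpa [hg0, ← hfa] using hf0
  · have : ¬ (a + b < a) := by omega
    simp [this, hgb]
  · intro i hi
    by_cases h1 : i + 1 < a
    · have h0 : i < a := by omega
      simpa [h0, h1] using hfm i (by omega)
    · by_cases h0 : i < a
      · have he : i + 1 = a := by omega
        have hm := hfm i (by omega)
        have : g (i + 1 - a) = f (i + 1) := by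
          rw [he]; simp [hg0, ← hfa]
        simpa [h0, h1, this, he, hg0, ← hfa] using hm
      · have h2' : i - a < b := by omega
        have : i + 1 - a = (i - a) + 1 := by omega
        simpa [h0, h1, this] using hgm (i - a) h2'

lemma reachIn_two {A B C : Finset (ℤ × ℤ)} (h1 : lineMove A B) (h2 : lineMove B C) :
    reachIn 2 A C := by
  refine ⟨fun i => if i = 0 then A else if i = 1 then B else C, by simp, by simp, ?_⟩
  intro i hi
  interval_cases i
  · simpa using h1
  · simpa using h2

/-- The key two-move step: teleport the base cell `(x, y0)` of a column along the
occupied row to the cell `(xe, y0)` just beyond its right end, then refill the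
hole `(x, y0)` by pushing the column cell `(x, t)` along its column. -/
lemma twoMove (S : Finset (ℤ × ℤ)) (x y0 xe t : ℤ)
    (hrow : ∀ z : ℤ, x ≤ z → z < xe → (z, y0) ∈ S)
    (hxe : (xe, y0) ∉ S)
    (hcol : ∀ z : ℤ, min t y0 ≤ z → z ≤ max t y0 → (x, z) ∈ S)
    (ht : t ≠ y0) (hxxe : x < xe) :
    reachIn 2 S (insert (xe, y0) (S.erase (x, t))) := by
  have hxS : (x, y0) ∈ S := hrow x le_rfl hxxe
  have hxt : (x, t) ∈ S := hcol t (min_le_left _ _) (le_max_left _ _)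
  set C1 : Finset (ℤ × ℤ) := insert (xe, y0) (S.erase (x, y0)) with hC1
  have hne1 : ((x, y0) : ℤ × ℤ) ≠ (x, t) := by simp [Prod.ext_iff]; omega
  have hne2 : ((xe, y0) : ℤ × ℤ) ≠ (x, t) := by simp [Prod.ext_iff]; omega
  have hxy0C1 : ((x, y0) : ℤ × ℤ) ∉ C1 := by
    intro h
    rcases Finset.mem_insert.mp h with h | h
    · exact absurd (congrArg Prod.fst h) (by simpa using hxxe.ne)
    · exact (Finset.mem_erase.mp h).1 rfl
  have hset : insert ((x : ℤ), y0) (C1.erase (x, t)) = insert (xe, y0) (S.erase (x, t)) := by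
    ext q
    simp only [hC1, Finset.mem_insert, Finset.mem_erase]
    constructor
    · rintro (rfl | ⟨hq1, rfl | ⟨hq2, hq3⟩⟩)
      · exact Or.inr ⟨hne1, hxS⟩
      · exact Or.inl rfl
      · exact Or.inr ⟨hq1, hq3⟩
    · rintro (rfl | ⟨hq1, hq2⟩)
      · exact Or.inr ⟨hne2, Or.inl rfl⟩
      · by_cases hq : q = ((x : ℤ), y0)
        · exact Or.inl hq
        · exact Or.inr ⟨hq1, Or.inr ⟨hq, hq2⟩⟩
  apply reachIn_two (B := C1)
  · -- move 1: push the row segment from (x,y0) one step to the right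
    refine ⟨(x, y0), (1, 0), (xe - x).toNat, Or.inl rfl, by omega, ?_, ?_, ?_⟩
    · intro j hj
      rw [prod_add_nsmul]
      simp only [mul_zero, add_zero]
      exact hrow (x + j * 1) (by omega) (by omega)
    · rw [prod_add_nsmul]
      simp only [mul_zero, add_zero]
      have : x + ((xe - x).toNat : ℤ) * 1 = xe := by omega
      rw [this]
      exact hxe
    · rw [prod_add_nsmul]
      simp only [mul_zero, add_zero]
      have : x + ((xe - x).toNat : ℤ) * 1 = xe := by omega
      rw [this]
  · -- move 2: push the column cell (x, t) into the hole (x, y0)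
    rcases lt_or_gt_of_ne ht with hlt | hgt
    · -- t < y0 : push upward
      refine ⟨(x, t), (0, 1), (y0 - t).toNat, Or.inr (Or.inr (Or.inl rfl)), by omega, ?_, ?_, ?_⟩
      · intro j hj
        rw [prod_add_nsmul]
        simp only [mul_zero, add_zero]
        have h1 : (x, t + (j : ℤ) * 1) ∈ S := hcol _ (by omega) (by omega)
        refine Finset.mem_insert_of_mem (Finset.mem_erase.mpr ⟨?_, h1⟩)
        simp [Prod.ext_iff]; omega
      · rw [prod_add_nsmul]
        simp only [mul_zero, add_zero]
        have : t + ((y0 - t).toNat : ℤ) * 1 = y0 := by omega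
        rw [this]
        exact hxy0C1
      · rw [prod_add_nsmul]
        simp only [mul_zero, add_zero]
        have : t + ((y0 - t).toNat : ℤ) * 1 = y0 := by omega
        rw [this]
        exact hset.symm
    · -- t > y0 : push downward
      refine ⟨(x, t), (0, -1), (t - y0).toNat, Or.inr (Or.inr (Or.inr rfl)), by omega, ?_, ?_, ?_⟩
      · intro j hj
        rw [prod_add_nsmul]
        simp only [mul_zero, add_zero]
        have h1 : (x, t + (j : ℤ) * (-1)) ∈ S := hcol _ (by omega) (by omega)
        refine Finset.mem_insert_of_mem (Finset.mem_erase.mpr ⟨?_, h1⟩)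
        simp [Prod.ext_iff]; omega
      · rw [prod_add_nsmul]
        simp only [mul_zero, add_zero]
        have : t + ((t - y0).toNat : ℤ) * (-1) = y0 := by omega
        rw [this]
        exact hxy0C1
      · rw [prod_add_nsmul]
        simp only [mul_zero, add_zero]
        have : t + ((t - y0).toNat : ℤ) * (-1) = y0 := by omega
        rw [this]
        exact hset.symm

lemma key (m : ℕ) : ∀ (S : Finset (ℤ × ℤ)) (x0 y0 : ℤ) (k : ℕ), 1 ≤ k →
    ((Finset.range k).image fun (i : ℕ) => ((x0 + (i : ℤ), y0) : ℤ × ℤ)) ⊆ S →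
    (∀ p ∈ S, (p.1, y0) ∈ ((Finset.range k).image fun (i : ℕ) => ((x0 + (i : ℤ), y0) : ℤ × ℤ)) ∧
      ∀ z : ℤ, min p.2 y0 ≤ z → z ≤ max p.2 y0 → (p.1, z) ∈ S) →
    S.card = k + m →
    ∃ C, isLine C ∧ C.card = S.card ∧ reachIn (2 * m) S C := by
  induction m with
  | zero =>
    intro S x0 y0 k hk hLS hvert hcard
    have hinj : Function.Injective (fun (i : ℕ) => ((x0 + (i : ℤ), y0) : ℤ × ℤ)) := by
      intro i j hij
      simp only [Prod.mk.injEq] at hij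
      omega
    have hLcard : ((Finset.range k).image fun (i : ℕ) => ((x0 + (i : ℤ), y0) : ℤ × ℤ)).card = k := by
      rw [Finset.card_image_of_injective _ hinj, Finset.card_range]
    have hSL : S = (Finset.range k).image fun (i : ℕ) => ((x0 + (i : ℤ), y0) : ℤ × ℤ) :=
      (Finset.eq_of_subset_of_card_le hLS (by omega)).symm
    refine ⟨S, ?_, rfl, ⟨fun _ => S, rfl, rfl, fun i hi => absurd hi (by omega)⟩⟩
    refine ⟨(x0, y0), (1, 0), Or.inl rfl, ?_⟩
    have hfun : (fun (i : ℕ) => ((x0, y0) : ℤ × ℤ) + i • ((1, 0) : ℤ × ℤ)) =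
        fun (i : ℕ) => ((x0 + (i : ℤ), y0) : ℤ × ℤ) := by
      funext i; rw [prod_add_nsmul]; simp
    rw [hfun, show S.card = k by omega, ← hSL]
  | succ m ih =>
    intro S x0 y0 k hk hLS hvert hcard
    set L := (Finset.range k).image fun (i : ℕ) => ((x0 + (i : ℤ), y0) : ℤ × ℤ) with hLdef
    have hinj : Function.Injective (fun (i : ℕ) => ((x0 + (i : ℤ), y0) : ℤ × ℤ)) := by
      intro i j hij
      simp only [Prod.mk.injEq] at hij
      omega
    have hLcard : L.card = k := by
      rw [hLdef, Finset.card_image_of_injective _ hinj, Finset.card_range]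
    have hnsub : ¬ S ⊆ L := by
      intro h
      have := Finset.card_le_card h
      omega
    obtain ⟨p, hpS, hpL⟩ := Finset.not_subset.mp hnsub
    obtain ⟨x, y⟩ := p
    have hy : y ≠ y0 := by
      rintro rfl
      exact hpL (hvert _ hpS).1
    have hxL : ((x, y0) : ℤ × ℤ) ∈ L := (hvert _ hpS).1
    obtain ⟨i, hi, hix⟩ : ∃ i : ℕ, i < k ∧ x0 + (i : ℤ) = x := by
      rw [hLdef] at hxL
      simp only [Finset.mem_image, Finset.mem_range, Prod.mk.injEq] at hxL
      obtain ⟨i, hi, h1, _⟩ := hxL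
      exact ⟨i, hi, h1⟩
    have hxlb : x0 ≤ x := by omega
    have hxub : x < x0 + k := by omega
    -- pick the extreme cell of the column of x on the same side as y
    obtain ⟨t, htS, htne, hsafe⟩ : ∃ t : ℤ, ((x, t) : ℤ × ℤ) ∈ S ∧ t ≠ y0 ∧
        ∀ q ∈ S, q.1 = x → q ≠ ((x, t) : ℤ × ℤ) →
          ∀ z : ℤ, min q.2 y0 ≤ z → z ≤ max q.2 y0 → z ≠ t := by
      classical
      set col := (S.filter fun q => q.1 = x).image Prod.snd with hcoldef
      have hyc : y ∈ col := by
        rw [hcoldef]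
        exact Finset.mem_image.mpr ⟨(x, y), Finset.mem_filter.mpr ⟨hpS, rfl⟩, rfl⟩
      have hcolmem : ∀ t ∈ col, ((x, t) : ℤ × ℤ) ∈ S := by
        intro t htc
        rw [hcoldef] at htc
        obtain ⟨q, hq, hq2⟩ := Finset.mem_image.mp htc
        obtain ⟨hq1, hq3⟩ := Finset.mem_filter.mp hq
        have : q = ((x, t) : ℤ × ℤ) := by
          ext <;> simp [hq3, hq2]
        rwa [this] at hq1
      have hmemcol : ∀ q ∈ S, q.1 = x → q.2 ∈ col := by
        intro q hq hq1
        rw [hcoldef]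
        exact Finset.mem_image.mpr ⟨q, Finset.mem_filter.mpr ⟨hq, hq1⟩, rfl⟩
      rcases lt_or_gt_of_ne hy with hlt | hgt
      · -- y < y0 : take the minimum of the column
        refine ⟨col.min' ⟨y, hyc⟩, hcolmem _ (col.min'_mem _), ?_, ?_⟩
        · have := col.min'_le y hyc
          omega
        · intro q hq hq1 hq2 z hz1 hz2
          have hqmin := col.min'_le q.2 (hmemcol q hq hq1)
          have hqne : q.2 ≠ col.min' ⟨y, hyc⟩ := by
            intro h
            apply hq2
            have : q = ((x, q.2) : ℤ × ℤ) := by ext <;> simp [hq1]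
            rw [this, h]
          have hmy : col.min' ⟨y, hyc⟩ < y0 := by
            have := col.min'_le y hyc
            omega
          omega
      · -- y > y0 : take the maximum of the column
        refine ⟨col.max' ⟨y, hyc⟩, hcolmem _ (col.max'_mem _), ?_, ?_⟩
        · have := col.le_max' y hyc
          omega
        · intro q hq hq1 hq2 z hz1 hz2
          have hqmax := col.le_max' q.2 (hmemcol q hq hq1)
          have hqne : q.2 ≠ col.max' ⟨y, hyc⟩ := by
            intro h
            apply hq2
            have : q = ((x, q.2) : ℤ × ℤ) := by ext <;> simp [hq1]
            rw [this, h]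
          have hmy : col.max' ⟨y, hyc⟩ > y0 := by
            have := col.le_max' y hyc
            omega
          omega
    have hxe : ((x0 + (k : ℤ), y0) : ℤ × ℤ) ∉ S := by
      intro h
      have := (hvert _ h).1
      rw [hLdef] at this
      simp only [Finset.mem_image, Finset.mem_range, Prod.mk.injEq] at this
      obtain ⟨j, hj, hj1, _⟩ := this
      omega
    have hrow : ∀ z : ℤ, x ≤ z → z < x0 + (k : ℤ) → ((z, y0) : ℤ × ℤ) ∈ S := by
      intro z hz1 hz2
      apply hLS
      rw [hLdef]
      refine Finset.mem_image.mpr ⟨(z - x0).toNat, Finset.mem_range.mpr (by omega), ?_⟩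
      have : x0 + ((z - x0).toNat : ℤ) = z := by omega
      rw [this]
    have hmove : reachIn 2 S (insert (x0 + (k : ℤ), y0) (S.erase (x, t))) :=
      twoMove S x y0 (x0 + (k : ℤ)) t hrow hxe ((hvert (x, t) htS).2) htne hxub
    set S' : Finset (ℤ × ℤ) := insert (x0 + (k : ℤ), y0) (S.erase (x, t)) with hS'def
    have hxtne : ((x0 + (k : ℤ), y0) : ℤ × ℤ) ≠ (x, t) := by
      intro h
      rw [Prod.mk.injEq] at h
      exact htne (h.2.symm)
    have hS'card : S'.card = (k + 1) + m := by
      rw [hS'def, Finset.card_insert_of_notMem, Finset.card_erase_of_mem htS]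
      · have : 1 ≤ S.card := by omega
        omega
      · intro h
        exact hxe (Finset.mem_erase.mp h).2
    -- the new central line of length k+1
    have hLsub : ∀ q ∈ ((Finset.range (k + 1)).image
        fun (i : ℕ) => ((x0 + (i : ℤ), y0) : ℤ × ℤ)), q ∈ S' := by
      intro q hq
      simp only [Finset.mem_image, Finset.mem_range] at hq
      obtain ⟨j, hj, rfl⟩ := hq
      by_cases hjk : j = k
      · subst hjk
        exact Finset.mem_insert_self _ _
      · refine Finset.mem_insert_of_mem (Finset.mem_erase.mpr ⟨?_, ?_⟩)
        · intro h
          rw [Prod.mk.injEq] at h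
          exact htne (h.2.symm)
        · apply hLS
          rw [hLdef]
          exact Finset.mem_image.mpr ⟨j, Finset.mem_range.mpr (by omega), rfl⟩
    have hvert' : ∀ q ∈ S', (q.1, y0) ∈ ((Finset.range (k + 1)).image
        fun (i : ℕ) => ((x0 + (i : ℤ), y0) : ℤ × ℤ)) ∧
        ∀ z : ℤ, min q.2 y0 ≤ z → z ≤ max q.2 y0 → (q.1, z) ∈ S' := by
      intro q hq
      rw [hS'def] at hq
      rcases Finset.mem_insert.mp hq with rfl | hq'
      · constructor
        · exact Finset.mem_image.mpr ⟨k, Finset.mem_range.mpr (by omega), rfl⟩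
        · intro z hz1 hz2
          simp only [min_self, max_self] at hz1 hz2
          have : z = y0 := le_antisymm hz2 hz1
          subst this
          exact Finset.mem_insert_self _ _
      · obtain ⟨hqt, hqS⟩ := Finset.mem_erase.mp hq'
        constructor
        · have h1 := (hvert q hqS).1
          rw [hLdef] at h1
          obtain ⟨j, hj, hj2⟩ := Finset.mem_image.mp h1
          exact Finset.mem_image.mpr ⟨j, Finset.mem_range.mpr
            (by have := Finset.mem_range.mp hj; omega), hj2⟩
        · intro z hz1 hz2
          have hzS : ((q.1, z) : ℤ × ℤ) ∈ S := (hvert q hqS).2 z hz1 hz2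
          refine Finset.mem_insert_of_mem (Finset.mem_erase.mpr ⟨?_, hzS⟩)
          by_cases hq1 : q.1 = x
          · have hznt : z ≠ t := hsafe q hqS hq1 hqt z hz1 hz2
            intro h
            rw [Prod.mk.injEq] at h
            exact hznt h.2
          · intro h
            rw [Prod.mk.injEq] at h
            exact hq1 h.1
    obtain ⟨C, hC1, hC2, hC3⟩ := ih S' x0 y0 (k + 1) (by omega)
      (fun q hq => hLsub q hq) hvert' hS'card
    refine ⟨C, hC1, by omega, ?_⟩
    have := reachIn_trans hmove hC3
    have h2 : 2 * (m + 1) = 2 + 2 * m := by omega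
    rwa [h2]

/-- A nice shape of order `n`, with central horizontal line of length `k`
(every node lying on a vertical segment of occupied cells attached to the
central line), can be transformed into a straight line of order `n` in at most
`2(n - k)` line moves — in particular in `O(n)` moves. -/
theorem nice_shape_to_line (S L : Finset (ℤ × ℤ)) (x0 y0 : ℤ) (k : ℕ) (hk : 1 ≤ k)
    (hL : L = (Finset.range k).image fun (i : ℕ) => ((x0 + (i : ℤ), y0) : ℤ × ℤ))
    (hLS : L ⊆ S)
    (hvert : ∀ p ∈ S, (p.1, y0) ∈ L ∧
      ∀ z : ℤ, min p.2 y0 ≤ z → z ≤ max p.2 y0 → (p.1, z) ∈ S) :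
    ∃ (N : ℕ) (C : Finset (ℤ × ℤ)),
      N ≤ 2 * (S.card - k) ∧ isLine C ∧ C.card = S.card ∧ reachIn N S C := by
  subst hL
  have hinj : Function.Injective (fun (i : ℕ) => ((x0 + (i : ℤ), y0) : ℤ × ℤ)) := by
    intro i j hij
    simp only [Prod.mk.injEq] at hij
    omega
  have hLcard : ((Finset.range k).image fun (i : ℕ) => ((x0 + (i : ℤ), y0) : ℤ × ℤ)).card = k := by
    rw [Finset.card_image_of_injective _ hinj, Finset.card_range]
  have hkS : k ≤ S.card := by
    have := Finset.card_le_card hLS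
    omega
  obtain ⟨C, hC1, hC2, hC3⟩ := key (S.card - k) S x0 y0 k hk hLS hvert (by omega)
  exact ⟨2 * (S.card - k), C, le_rfl, hC1, hC2, hC3⟩
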